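/- Let 1 → ℤ →^ι E →^π G → 1 be a central extension of groups with E finitely generated. If the central subgroup ι(ℤ) is undistorted in E, then the Euler class of the extension is weakly bounded. -/
import Mathlib


open Monoid
open scoped Monoid.Coprod

namespace QMExt

section QM

variable {H : Type*} [Group H]

/-- A quasimorphism: a real-valued function with finite defect. -/
def IsQM (φ : H → ℝ) : Prop := ∃ D : ℝ, ∀ g h : H, |φ g + φ h - φ (g * h)| ≤ D

/-- The defect `D(φ)` of a quasimorphism. -/
noncomputable def qmDefect (φ : H → ℝ) : ℝ :=
  sSup {r : ℝ | ∃ g h : H, r = |φ g + φ h - φ (g * h)|}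

/-- An antisymmetric function: `φ(g⁻¹) = -φ(g)`. -/
def IsAntisym (φ : H → ℝ) : Prop := ∀ g : H, φ g⁻¹ = - φ g

end QM

section WordMetric

variable {Q : Type*} [Group Q]

/-- Word length of `q` with respect to the alphabet `S`. -/
noncomputable def wordLenOn (S : Set Q) (q : Q) : ℕ :=
  sInf {n | ∃ l : List Q, (∀ y ∈ l, y ∈ S) ∧ l.prod = q ∧ l.length = n}

/-- Distance in the Cayley graph of `Q` with respect to the generating set `S`. -/
noncomputable def wordDist (S : Set Q) (g h : Q) : ℝ := (wordLenOn S (g⁻¹ * h) : ℝ)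

/-- Gromov product of `x` and `y` at `w` in the Cayley graph. -/
noncomputable def gprod (S : Set Q) (x y w : Q) : ℝ :=
  (wordDist S w x + wordDist S w y - wordDist S x y) / 2

/-- The Cayley graph of `Q` w.r.t. `S` is Gromov δ-hyperbolic (four-point condition). -/
def HypWith (S : Set Q) (δ : ℝ) : Prop :=
  ∀ w x y z : Q, min (gprod S x y w) (gprod S y z w) - δ ≤ gprod S x z w

end WordMetric

/-- A group is hyperbolic if it has a finite symmetric generating set whose
Cayley graph is Gromov hyperbolic. -/
def IsHyperbolicGroup (Q : Type*) [Group Q] : Prop :=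
  ∃ S : Set Q, S.Finite ∧ (∀ s ∈ S, s⁻¹ ∈ S) ∧ Subgroup.closure S = ⊤ ∧
    ∃ δ : ℝ, 0 ≤ δ ∧ HypWith S δ

section Rel

variable {Q : Type*} [Group Q]

/-- `φ : P → ℝ` is `Q`-quasi-invariant. -/
def IsGQuasiInvariant (P : Subgroup Q) (φ : ↥P → ℝ) : Prop :=
  ∃ D : ℝ, ∀ k₁ k₂ : ↥P, IsConj (k₁ : Q) (k₂ : Q) → |φ k₁ - φ k₂| ≤ D

/-- `D^Q(φ)`, the quasi-invariance defect of `φ : P → ℝ`. -/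
noncomputable def invDefect (P : Subgroup Q) (φ : ↥P → ℝ) : ℝ :=
  sSup {r : ℝ | ∃ k₁ k₂ : ↥P, IsConj (k₁ : Q) (k₂ : Q) ∧ r = |φ k₁ - φ k₂|}

/-- A letter of the alphabet `P ⊔ Y`: either a `P`-letter, or a generator `y ∈ Y`
or its formal inverse (marked by the boolean). -/
abbrev RelLetter (P : Subgroup Q) (Y : Set Q) : Type _ := ↥P ⊕ ↥Y × Bool

/-- Evaluation of a letter in the free product `P ∗ F(Y)`. -/
noncomputable def evalLetter (P : Subgroup Q) (Y : Set Q) :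
    RelLetter P Y → (↥P ∗ FreeGroup ↥Y)
  | Sum.inl k => Coprod.inl k
  | Sum.inr (x, true) => Coprod.inr (FreeGroup.of x)
  | Sum.inr (x, false) => (Coprod.inr (FreeGroup.of x))⁻¹

/-- Evaluation of a word on the alphabet `P ⊔ Y` in the free product `P ∗ F(Y)`. -/
noncomputable def evalWord (P : Subgroup Q) (Y : Set Q) (l : List (RelLetter P Y)) :
    ↥P ∗ FreeGroup ↥Y :=
  (l.map (evalLetter P Y)).prod

/-- The projection `η : P ∗ F(Y) → P` killing all `Y`-letters. -/
noncomputable def eta (P : Subgroup Q) (Y : Set Q) : (↥P ∗ FreeGroup ↥Y) →* ↥P :=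
  Coprod.lift (MonoidHom.id ↥P) 1

/-- The evaluation map `θ : P ∗ F(Y) → Q`. -/
noncomputable def theta (P : Subgroup Q) (Y : Set Q) : (↥P ∗ FreeGroup ↥Y) →* Q :=
  Coprod.lift P.subtype (FreeGroup.lift fun y : ↥Y => (y : Q))

/-- Word length `|a|` of `a ∈ P ∗ F(Y)` over the alphabet `P ⊔ Y`. -/
noncomputable def wordLen (P : Subgroup Q) (Y : Set Q) (a : ↥P ∗ FreeGroup ↥Y) : ℕ :=
  sInf {n | ∃ l : List (RelLetter P Y), evalWord P Y l = a ∧ l.length = n}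

/-- `|a|_Y`: the number of `Y`-letters in the normal form of `a`, i.e. the least
number of `Y`-letters in a word over `P ⊔ Y` representing `a`. -/
noncomputable def xLen (P : Subgroup Q) (Y : Set Q) (a : ↥P ∗ FreeGroup ↥Y) : ℕ :=
  sInf {m | ∃ l : List (RelLetter P Y), evalWord P Y l = a ∧ l.countP Sum.isRight = m}

/-- `φ` is `(Q,Y)`-controlled by `f`. -/
def ControlledBy (P : Subgroup Q) (Y : Set Q) (φ : ↥P → ℝ) (f : ℕ → ℝ) : Prop :=
  ∀ n : ℕ, ∀ a : ↥P ∗ FreeGroup ↥Y, a ∈ (theta P Y).ker → wordLen P Y a ≤ n →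
    |φ (eta P Y a)| ≤ f n

/-- `φ` is `(Q,Y)`-controlled. -/
def Controlled (P : Subgroup Q) (Y : Set Q) (φ : ↥P → ℝ) : Prop :=
  ∃ f : ℕ → ℝ, ControlledBy P Y φ f

/-- `φ` is linearly `(Q,Y)`-controlled with constant `C₀`. -/
def LinearlyControlled (P : Subgroup Q) (Y : Set Q) (φ : ↥P → ℝ) (C₀ : ℝ) : Prop :=
  ControlledBy P Y φ (fun n => C₀ * n + C₀)

/-- `R` is the set of relators of a relative presentation `Q = ⟨P, Y ∣ R_P, R⟩`:
`Y` is a relative generating set and `ker θ` is the normal closure of `R`. -/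
def IsRelPresentation (P : Subgroup Q) (Y : Set Q) (R : Set (↥P ∗ FreeGroup ↥Y)) : Prop :=
  Function.Surjective (theta P Y) ∧ Subgroup.normalClosure R = (theta P Y).ker

/-- `f` is a relative isoperimetric function of the relative presentation with relators `R`. -/
def RelIsoperimetricFn (P : Subgroup Q) (Y : Set Q) (R : Set (↥P ∗ FreeGroup ↥Y))
    (f : ℕ → ℝ) : Prop :=
  ∀ n : ℕ, ∀ a ∈ (theta P Y).ker, wordLen P Y a ≤ n →
    ∃ l : List ((↥P ∗ FreeGroup ↥Y) × (↥P ∗ FreeGroup ↥Y)),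
      (∀ p ∈ l, p.2 ∈ R) ∧ (l.map fun p => p.1 * p.2 * p.1⁻¹).prod = a ∧ (l.length : ℝ) ≤ f n

/-- Admissible adjacent pairs in a reduced word: no two adjacent `P`-letters, and no
adjacent pair `y y⁻¹` or `y⁻¹ y` of `Y`-letters. -/
def okPair (P : Subgroup Q) (Y : Set Q) : RelLetter P Y → RelLetter P Y → Prop
  | Sum.inl _, Sum.inl _ => False
  | Sum.inr (x, s), Sum.inr (y, t) => x = y → t ≠ !s
  | _, _ => True

/-- A reduced word on `P ⊔ Y` (the normal form of the element it represents). -/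
def IsReducedWord (P : Subgroup Q) (Y : Set Q) (l : List (RelLetter P Y)) : Prop :=
  (∀ k : ↥P, Sum.inl k ∈ l → k ≠ 1) ∧ l.Chain' (okPair P Y)

/-- The relative presentation with relators `R` is bounded. -/
def BoundedRel (P : Subgroup Q) (Y : Set Q) (R : Set (↥P ∗ FreeGroup ↥Y)) : Prop :=
  ∃ B : ℕ, ∀ r ∈ R, wordLen P Y r ≤ B

/-- The relative presentation with relators `R` is strongly bounded: the relators have
uniformly bounded length and only finitely many `P`-letters occur in them. -/
def StronglyBoundedRel (P : Subgroup Q) (Y : Set Q) (R : Set (↥P ∗ FreeGroup ↥Y)) : Prop :=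
  ∃ B : ℕ, ∃ F : Set ↥P, F.Finite ∧
    ∀ r ∈ R, ∃ l : List (RelLetter P Y), IsReducedWord P Y l ∧ evalWord P Y l = r ∧
      l.length ≤ B ∧ ∀ k : ↥P, Sum.inl k ∈ l → k ∈ F

/-- `P` is hyperbolically embedded in `Q`: there are a symmetric relative generating set and
a strongly bounded relative presentation with a linear relative isoperimetric function. -/
def IsHypEmbedded (P : Subgroup Q) : Prop :=
  ∃ Y : Set Q, (∀ y ∈ Y, y⁻¹ ∈ Y) ∧ ∃ R : Set (↥P ∗ FreeGroup ↥Y),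
    IsRelPresentation P Y R ∧ StronglyBoundedRel P Y R ∧
    ∃ A B : ℝ, RelIsoperimetricFn P Y R (fun n => A * n + B)

/-- `Q` is hyperbolic relative to `P` (Osin): there is a finite relative presentation
with a linear relative isoperimetric function. -/
def IsRelHyperbolic (P : Subgroup Q) : Prop :=
  ∃ Y : Set Q, (∀ y ∈ Y, y⁻¹ ∈ Y) ∧ ∃ R : Set (↥P ∗ FreeGroup ↥Y), R.Finite ∧
    IsRelPresentation P Y R ∧ ∃ A B : ℝ, RelIsoperimetricFn P Y R (fun n => A * n + B)

/-- `L` is a (left) transversal of `P` in `Q`: a set of coset representatives. -/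
def IsTransversal (P : Subgroup Q) (L : Set Q) : Prop :=
  ∀ q : Q, ∃! l : Q, l ∈ L ∧ l⁻¹ * q ∈ P

/-- `φ̃_C(a) := φ̃(a) + C·|a|_Y`. -/
noncomputable def phitC (P : Subgroup Q) (Y : Set Q) (φ : ↥P → ℝ) (C : ℝ)
    (a : ↥P ∗ FreeGroup ↥Y) : ℝ :=
  φ (eta P Y a) + C * (xLen P Y a : ℝ)

/-- `Φ_C(g) := inf { φ̃_C(a) ∣ θ(a) = g }`. -/
noncomputable def PhiC (P : Subgroup Q) (Y : Set Q) (φ : ↥P → ℝ) (C : ℝ) (g : Q) : ℝ :=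
  sInf {r : ℝ | ∃ a : ↥P ∗ FreeGroup ↥Y, theta P Y a = g ∧ r = phitC P Y φ C a}

end Rel

section Quot

/-- Word length of an element of a free group. -/
noncomputable def freeLen {A : Type*} (w : FreeGroup A) : ℕ :=
  sInf {n | ∃ l : List (A × Bool), FreeGroup.mk l = w ∧ l.length = n}

/-- `f` is an isoperimetric function of the presentation of `Q` with generators `A`
(mapped to `Q` by `pr`) and relators `Rb`. -/
def IsoFn {Q : Type*} [Group Q] {A : Type*} (pr : FreeGroup A →* Q)
    (Rb : Set (FreeGroup A)) (f : ℕ → ℝ) : Prop :=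
  ∀ n : ℕ, ∀ w ∈ pr.ker, freeLen w ≤ n →
    ∃ l : List (FreeGroup A × FreeGroup A), (∀ p ∈ l, p.2 ∈ Rb) ∧
      (l.map fun p => p.1 * p.2 * p.1⁻¹).prod = w ∧ (l.length : ℝ) ≤ f n

variable {G : Type*} [Group G]

/-- The set of relators `R = { s(r̄)·k_r⁻¹ }` obtained by lifting the relators `R̄` of a
presentation of `G/K` along the lift `σ` of the generators. -/
def Rlift (K : Subgroup G) {Xbar : Set (G ⧸ K)} (Rbar : Set (FreeGroup ↥Xbar))
    (σ : ↥Xbar → G) : Set (↥K ∗ FreeGroup ↥(Set.range σ)) :=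
  {a | ∃ r ∈ Rbar, ∃ k : ↥K,
    theta K (Set.range σ) (Coprod.inr (FreeGroup.map (Set.rangeFactorization σ) r)) = ↑k ∧
    a = Coprod.inr (FreeGroup.map (Set.rangeFactorization σ) r) * (Coprod.inl k)⁻¹}

/-- The set of relators `T' = { w k w⁻¹ k_w⁻¹ ∣ w ∈ X*, k ∈ K }`. -/
def Tset (K : Subgroup G) (X : Set G) : Set (↥K ∗ FreeGroup ↥X) :=
  {a | ∃ lw : List ↥X, ∃ k k' : ↥K,
    theta K X (Coprod.inr (lw.map FreeGroup.of).prod * Coprod.inl k *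
      (Coprod.inr (lw.map FreeGroup.of).prod)⁻¹) = ↑k' ∧
    a = Coprod.inr (lw.map FreeGroup.of).prod * Coprod.inl k *
      (Coprod.inr (lw.map FreeGroup.of).prod)⁻¹ * (Coprod.inl k')⁻¹}

/-- The set of `(G,K)`-commutators `[g,k]` with `g ∈ G`, `k ∈ K`. -/
def commSet (G : Type*) [Group G] (K : Subgroup G) : Set G :=
  {c | ∃ g : G, ∃ k ∈ K, c = g * k * g⁻¹ * k⁻¹}

/-- Stable word length (e.g. stable (mixed) commutator length) with respect to the
generating set `S`, as the infimum of `|gⁿ|/n`. -/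
noncomputable def sclOn {G : Type*} [Group G] (S : Set G) (g : G) : ℝ :=
  ⨅ n : ℕ+, (wordLenOn S (g ^ (n : ℕ)) : ℝ) / ((n : ℕ) : ℝ)

end Quot

end QMExt
open QMExt

section WBAux

variable {E : Type*} [Group E]

lemma wbx_wl_le {S : Set E} {l : List E} (hl : ∀ y ∈ l, y ∈ S) {a : E} (ha : l.prod = a) :
    wordLenOn S a ≤ l.length :=
  Nat.sInf_le ⟨l, hl, ha, rfl⟩

lemma wbx_exists_word {S : Set E} (hSsym : ∀ s ∈ S, s⁻¹ ∈ S)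
    (hSgen : Subgroup.closure S = ⊤) (a : E) :
    ∃ l : List E, (∀ y ∈ l, y ∈ S) ∧ l.prod = a ∧ l.length = wordLenOn S a := by
  have ha : a ∈ Subgroup.closure S := by rw [hSgen]; trivial
  have hne : ∃ l : List E, (∀ y ∈ l, y ∈ S) ∧ l.prod = a := by
    induction ha using Subgroup.closure_induction with
    | mem x hx => exact ⟨[x], by simpa using hx, by simp⟩
    | one => exact ⟨[], by simp, by simp⟩
    | mul x y hx hy ihx ihy =>
        obtain ⟨lx, h1, h2⟩ := ihx
        obtain ⟨ly, h3, h4⟩ := ihy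
        refine ⟨lx ++ ly, ?_, by simp [h2, h4]⟩
        intro z hz
        rcases List.mem_append.mp hz with h | h
        exacts [h1 z h, h3 z h]
    | inv x hx ih =>
        obtain ⟨l, h1, h2⟩ := ih
        refine ⟨(l.map fun z => z⁻¹).reverse, ?_, ?_⟩
        · intro z hz
          simp only [List.mem_reverse, List.mem_map] at hz
          obtain ⟨w, hw, rfl⟩ := hz
          exact hSsym w (h1 w hw)
        · rw [← List.prod_inv_reverse, h2]
  have hset : {n | ∃ l : List E, (∀ y ∈ l, y ∈ S) ∧ l.prod = a ∧ l.length = n}.Nonempty := by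
    obtain ⟨l, h1, h2⟩ := hne
    exact ⟨l.length, l, h1, h2, rfl⟩
  obtain ⟨l, h1, h2, h3⟩ := Nat.sInf_mem hset
  exact ⟨l, h1, h2, h3⟩

lemma wbx_wl_mul {S : Set E} (hSsym : ∀ s ∈ S, s⁻¹ ∈ S)
    (hSgen : Subgroup.closure S = ⊤) (a b : E) :
    wordLenOn S (a * b) ≤ wordLenOn S a + wordLenOn S b := by
  obtain ⟨la, h1, h2, h3⟩ := wbx_exists_word hSsym hSgen a
  obtain ⟨lb, h4, h5, h6⟩ := wbx_exists_word hSsym hSgen b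
  have hle : wordLenOn S (a * b) ≤ (la ++ lb).length := by
    refine wbx_wl_le ?_ (by simp [h2, h5])
    intro z hz
    rcases List.mem_append.mp hz with h | h
    exacts [h1 z h, h4 z h]
  simpa [h3, h6] using hle

lemma wbx_wl_inv_le {S : Set E} (hSsym : ∀ s ∈ S, s⁻¹ ∈ S)
    (hSgen : Subgroup.closure S = ⊤) (a : E) :
    wordLenOn S a⁻¹ ≤ wordLenOn S a := by
  obtain ⟨l, h1, h2, h3⟩ := wbx_exists_word hSsym hSgen a
  have hle : wordLenOn S a⁻¹ ≤ ((l.map fun z => z⁻¹).reverse).length := by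
    refine wbx_wl_le ?_ ?_
    · intro z hz
      simp only [List.mem_reverse, List.mem_map] at hz
      obtain ⟨w, hw, rfl⟩ := hz
      exact hSsym w (h1 w hw)
    · rw [← List.prod_inv_reverse, h2]
  simpa [h3] using hle

lemma wbx_wl_inv {S : Set E} (hSsym : ∀ s ∈ S, s⁻¹ ∈ S)
    (hSgen : Subgroup.closure S = ⊤) (a : E) :
    wordLenOn S a⁻¹ = wordLenOn S a := by
  refine le_antisymm (wbx_wl_inv_le hSsym hSgen a) ?_
  simpa using wbx_wl_inv_le hSsym hSgen a⁻¹

/-- Two-sided distance to the central fiber: least total word length of `a, b` with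
`e = a * x * b`. -/
noncomputable def wbxD (S : Set E) (x e : E) : ℕ :=
  sInf {n | ∃ a b : E, e = a * x * b ∧ n = wordLenOn S a + wordLenOn S b}

lemma wbxD_le {S : Set E} {x e a b : E} (h : e = a * x * b) :
    wbxD S x e ≤ wordLenOn S a + wordLenOn S b := Nat.sInf_le ⟨a, b, h, rfl⟩

lemma wbxD_exists (S : Set E) (x e : E) :
    ∃ a b : E, e = a * x * b ∧ wbxD S x e = wordLenOn S a + wordLenOn S b := by
  have hset : {n | ∃ a b : E, e = a * x * b ∧ n = wordLenOn S a + wordLenOn S b}.Nonempty :=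
    ⟨wordLenOn S (e * x⁻¹) + wordLenOn S 1, e * x⁻¹, 1, by group, rfl⟩
  obtain ⟨a, b, h1, h2⟩ := Nat.sInf_mem hset
  exact ⟨a, b, h1, h2⟩

/-- The McShane-type extension: `φ(e) = inf_k (k + 2λ·D(ι k, e))`. -/
noncomputable def wbxPhi (S : Set E) (lam : ℝ) (ι : ℤ → E) (e : E) : ℝ :=
  sInf {r : ℝ | ∃ k : ℤ, r = (k : ℝ) + 2 * lam * (wbxD S (ι k) e : ℝ)}

lemma wbxPhi_set_nonempty (S : Set E) (lam : ℝ) (ι : ℤ → E) (e : E) :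
    {r : ℝ | ∃ k : ℤ, r = (k : ℝ) + 2 * lam * (wbxD S (ι k) e : ℝ)}.Nonempty :=
  ⟨(0 : ℝ) + 2 * lam * (wbxD S (ι 0) e : ℝ), 0, by norm_num⟩

lemma wbxPhi_lb {S : Set E} {lam : ℝ} {ι : ℤ → E}
    (hSsym : ∀ s ∈ S, s⁻¹ ∈ S) (hSgen : Subgroup.closure S = ⊤)
    (hlam : 1 ≤ lam)
    (hundist : ∀ n : ℤ, (|n| : ℝ) ≤ lam * (wordLenOn S (ι n) : ℝ) + lam) (e : E) :
    ∀ r ∈ {r : ℝ | ∃ k : ℤ, r = (k : ℝ) + 2 * lam * (wbxD S (ι k) e : ℝ)},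
      -(lam * ((wordLenOn S e : ℝ) + 1)) ≤ r := by
  rintro r ⟨k, rfl⟩
  have hlam0 : (0 : ℝ) ≤ lam := le_trans zero_le_one hlam
  obtain ⟨a, b, hab, hD⟩ := wbxD_exists S (ι k) e
  have h1 : ι k = a⁻¹ * e * b⁻¹ := by rw [hab]; group
  have h2 : wordLenOn S (ι k) ≤ wordLenOn S a + wordLenOn S e + wordLenOn S b := by
    calc wordLenOn S (ι k) ≤ wordLenOn S (a⁻¹ * e) + wordLenOn S b⁻¹ := by
          rw [h1]; exact wbx_wl_mul hSsym hSgen _ _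
    _ ≤ wordLenOn S a⁻¹ + wordLenOn S e + wordLenOn S b⁻¹ := by
          have := wbx_wl_mul hSsym hSgen a⁻¹ e
          omega
    _ = wordLenOn S a + wordLenOn S e + wordLenOn S b := by
          rw [wbx_wl_inv hSsym hSgen, wbx_wl_inv hSsym hSgen]
  have h2' : (wordLenOn S (ι k) : ℝ) ≤ (wbxD S (ι k) e : ℝ) + (wordLenOn S e : ℝ) := by
    have hn : wordLenOn S (ι k) ≤ wbxD S (ι k) e + wordLenOn S e := by omega
    exact_mod_cast hn
  have h3 : lam * (wordLenOn S (ι k) : ℝ) ≤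
      lam * ((wbxD S (ι k) e : ℝ) + (wordLenOn S e : ℝ)) :=
    mul_le_mul_of_nonneg_left h2' hlam0
  have h4 : -(k : ℝ) ≤ |(k : ℝ)| := neg_le_abs _
  have h5 : |(k : ℝ)| ≤ lam * (wordLenOn S (ι k) : ℝ) + lam := hundist k
  have h6 : (0 : ℝ) ≤ lam * (wbxD S (ι k) e : ℝ) :=
    mul_nonneg hlam0 (Nat.cast_nonneg _)
  nlinarith

lemma wbxPhi_bdd {S : Set E} {lam : ℝ} {ι : ℤ → E}
    (hSsym : ∀ s ∈ S, s⁻¹ ∈ S) (hSgen : Subgroup.closure S = ⊤)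
    (hlam : 1 ≤ lam)
    (hundist : ∀ n : ℤ, (|n| : ℝ) ≤ lam * (wordLenOn S (ι n) : ℝ) + lam) (e : E) :
    BddBelow {r : ℝ | ∃ k : ℤ, r = (k : ℝ) + 2 * lam * (wbxD S (ι k) e : ℝ)} :=
  ⟨_, wbxPhi_lb hSsym hSgen hlam hundist e⟩

lemma wbx_csInf_le_add {A B : Set ℝ} {c : ℝ} (hA : A.Nonempty) (hBb : BddBelow B)
    (h : ∀ r ∈ A, ∃ r' ∈ B, r' ≤ r + c) : sInf B ≤ sInf A + c := by
  have hle : sInf B - c ≤ sInf A := by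
    refine le_csInf hA fun r hr => ?_
    obtain ⟨r', hB, hle⟩ := h r hr
    have := csInf_le hBb hB
    linarith
  linarith

lemma wbxPhi_mul_left_le {S : Set E} {lam : ℝ} {ι : ℤ → E}
    (hSsym : ∀ s ∈ S, s⁻¹ ∈ S) (hSgen : Subgroup.closure S = ⊤) (hlam : 1 ≤ lam)
    (hundist : ∀ n : ℤ, (|n| : ℝ) ≤ lam * (wordLenOn S (ι n) : ℝ) + lam) (x y : E) :
    wbxPhi S lam ι (x * y) ≤ wbxPhi S lam ι y + 2 * lam * (wordLenOn S x : ℝ) := by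
  refine wbx_csInf_le_add (wbxPhi_set_nonempty S lam ι y)
    (wbxPhi_bdd hSsym hSgen hlam hundist (x * y)) ?_
  rintro r ⟨k, rfl⟩
  refine ⟨(k : ℝ) + 2 * lam * (wbxD S (ι k) (x * y) : ℝ), ⟨k, rfl⟩, ?_⟩
  obtain ⟨a, b, hab, hD⟩ := wbxD_exists S (ι k) y
  have h1 : x * y = (x * a) * ι k * b := by rw [hab]; group
  have h2 : wbxD S (ι k) (x * y) ≤ wordLenOn S (x * a) + wordLenOn S b := wbxD_le h1
  have h3 : wbxD S (ι k) (x * y) ≤ wordLenOn S x + wbxD S (ι k) y := by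
    have := wbx_wl_mul hSsym hSgen x a; omega
  have h3' : (wbxD S (ι k) (x * y) : ℝ) ≤ (wordLenOn S x : ℝ) + (wbxD S (ι k) y : ℝ) := by
    exact_mod_cast h3
  have hlam0 : (0 : ℝ) ≤ 2 * lam := by linarith
  nlinarith [mul_le_mul_of_nonneg_left h3' hlam0]

lemma wbxPhi_mul_right_le {S : Set E} {lam : ℝ} {ι : ℤ → E}
    (hSsym : ∀ s ∈ S, s⁻¹ ∈ S) (hSgen : Subgroup.closure S = ⊤) (hlam : 1 ≤ lam)
    (hundist : ∀ n : ℤ, (|n| : ℝ) ≤ lam * (wordLenOn S (ι n) : ℝ) + lam) (x y : E) :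
    wbxPhi S lam ι (y * x) ≤ wbxPhi S lam ι y + 2 * lam * (wordLenOn S x : ℝ) := by
  refine wbx_csInf_le_add (wbxPhi_set_nonempty S lam ι y)
    (wbxPhi_bdd hSsym hSgen hlam hundist (y * x)) ?_
  rintro r ⟨k, rfl⟩
  refine ⟨(k : ℝ) + 2 * lam * (wbxD S (ι k) (y * x) : ℝ), ⟨k, rfl⟩, ?_⟩
  obtain ⟨a, b, hab, hD⟩ := wbxD_exists S (ι k) y
  have h1 : y * x = a * ι k * (b * x) := by rw [hab]; group
  have h2 : wbxD S (ι k) (y * x) ≤ wordLenOn S a + wordLenOn S (b * x) := wbxD_le h1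
  have h3 : wbxD S (ι k) (y * x) ≤ wordLenOn S x + wbxD S (ι k) y := by
    have := wbx_wl_mul hSsym hSgen b x; omega
  have h3' : (wbxD S (ι k) (y * x) : ℝ) ≤ (wordLenOn S x : ℝ) + (wbxD S (ι k) y : ℝ) := by
    exact_mod_cast h3
  have hlam0 : (0 : ℝ) ≤ 2 * lam := by linarith
  nlinarith [mul_le_mul_of_nonneg_left h3' hlam0]

lemma wbxPhi_equi_le {S : Set E} {lam : ℝ} {ι : ℤ → E}
    (hhom : ∀ m n : ℤ, ι (m + n) = ι m * ι n)
    (hcentral : ∀ n : ℤ, ∀ e : E, ι n * e = e * ι n)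
    (hSsym : ∀ s ∈ S, s⁻¹ ∈ S) (hSgen : Subgroup.closure S = ⊤) (hlam : 1 ≤ lam)
    (hundist : ∀ n : ℤ, (|n| : ℝ) ≤ lam * (wordLenOn S (ι n) : ℝ) + lam) (e : E) (m : ℤ) :
    wbxPhi S lam ι (e * ι m) ≤ wbxPhi S lam ι e + m := by
  refine wbx_csInf_le_add (wbxPhi_set_nonempty S lam ι e)
    (wbxPhi_bdd hSsym hSgen hlam hundist (e * ι m)) ?_
  rintro r ⟨k, rfl⟩
  refine ⟨((k + m : ℤ) : ℝ) + 2 * lam * (wbxD S (ι (k + m)) (e * ι m) : ℝ), ⟨k + m, rfl⟩, ?_⟩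
  obtain ⟨a, b, hab, hD⟩ := wbxD_exists S (ι k) e
  have h1 : e * ι m = a * ι (k + m) * b := by
    rw [hab, mul_assoc, ← hcentral m b, ← mul_assoc, mul_assoc a (ι k) (ι m), ← hhom k m]
  have h2 : wbxD S (ι (k + m)) (e * ι m) ≤ wordLenOn S a + wordLenOn S b := wbxD_le h1
  have h2' : (wbxD S (ι (k + m)) (e * ι m) : ℝ) ≤ (wbxD S (ι k) e : ℝ) := by
    exact_mod_cast hD ▸ h2
  have hlam0 : (0 : ℝ) ≤ 2 * lam := by linarith
  push_cast
  nlinarith [mul_le_mul_of_nonneg_left h2' hlam0]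

lemma wbxPhi_equi {S : Set E} {lam : ℝ} {ι : ℤ → E}
    (hhom : ∀ m n : ℤ, ι (m + n) = ι m * ι n)
    (hcentral : ∀ n : ℤ, ∀ e : E, ι n * e = e * ι n)
    (hSsym : ∀ s ∈ S, s⁻¹ ∈ S) (hSgen : Subgroup.closure S = ⊤) (hlam : 1 ≤ lam)
    (hundist : ∀ n : ℤ, (|n| : ℝ) ≤ lam * (wordLenOn S (ι n) : ℝ) + lam) (e : E) (m : ℤ) :
    wbxPhi S lam ι (e * ι m) = wbxPhi S lam ι e + m := by
  have h0 : ι 0 = 1 := by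
    have := hhom 0 0; norm_num at this; exact this
  have hcancel : (e * ι m) * ι (-m) = e := by
    rw [mul_assoc, ← hhom]; simp [h0]
  have h1 := wbxPhi_equi_le hhom hcentral hSsym hSgen hlam hundist e m
  have h2 := wbxPhi_equi_le hhom hcentral hSsym hSgen hlam hundist (e * ι m) (-m)
  rw [hcancel] at h2
  push_cast at h1 h2 ⊢
  linarith

end WBAux

/-- If `1 → ℤ → E → G → 1` is a central extension with `E` finitely generated and the
central copy of `ℤ` undistorted in `E`, then the Euler class of the extension is weakly
bounded: some 2-cocycle representing it (i.e. differing from a section cocycle `ω_s` by a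
coboundary) is weakly bounded. -/
theorem weakly_bounded_euler_class_of_undistorted {E Gq : Type*} [Group E] [Group Gq]
    (ι : ℤ → E) (π : E →* Gq)
    (hhom : ∀ m n : ℤ, ι (m + n) = ι m * ι n)
    (hinj : Function.Injective ι)
    (hcentral : ∀ n : ℤ, ∀ e : E, ι n * e = e * ι n)
    (hsurj : Function.Surjective π)
    (hexact : ∀ e : E, π e = 1 ↔ ∃ n : ℤ, ι n = e)
    (S : Set E) (hSfin : S.Finite) (hSsym : ∀ s ∈ S, s⁻¹ ∈ S)
    (hSgen : Subgroup.closure S = ⊤)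
    (lam : ℝ) (hlam : 1 ≤ lam)
    (hundist : ∀ n : ℤ, (|n| : ℝ) ≤ lam * (wordLenOn S (ι n) : ℝ) + lam) :
    ∃ s : Gq → E, (∀ g : Gq, π (s g) = g) ∧
      ∃ ωs : Gq → Gq → ℤ,
        (∀ g₁ g₂ : Gq, ι (ωs g₁ g₂) = s g₁ * s g₂ * (s (g₁ * g₂))⁻¹) ∧
        ∃ ω : Gq → Gq → ℤ, ∃ b : Gq → ℤ,
          (∀ g₁ g₂ : Gq, ω g₁ g₂ = ωs g₁ g₂ + b g₁ + b g₂ - b (g₁ * g₂)) ∧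
          (∀ g : Gq, ∃ Bnd : ℤ, (∀ h : Gq, |ω g h| ≤ Bnd) ∧ (∀ h : Gq, |ω h g| ≤ Bnd)) := by
    classical
  set φ : E → ℝ := wbxPhi S lam ι with hφdef
  have hequi : ∀ (e : E) (m : ℤ), φ (e * ι m) = φ e + m :=
    fun e m => wbxPhi_equi hhom hcentral hSsym hSgen hlam hundist e m
  have hleft : ∀ x y : E, φ (x * y) ≤ φ y + 2 * lam * (wordLenOn S x : ℝ) :=
    fun x y => wbxPhi_mul_left_le hSsym hSgen hlam hundist x y
  have hright : ∀ x y : E, φ (y * x) ≤ φ y + 2 * lam * (wordLenOn S x : ℝ) :=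
    fun x y => wbxPhi_mul_right_le hSsym hSgen hlam hundist x y
  have hleft' : ∀ x y : E, φ y - 2 * lam * (wordLenOn S x : ℝ) ≤ φ (x * y) := by
    intro x y
    have h := hleft x⁻¹ (x * y)
    rw [inv_mul_cancel_left, wbx_wl_inv hSsym hSgen] at h
    linarith
  have hright' : ∀ x y : E, φ y - 2 * lam * (wordLenOn S x : ℝ) ≤ φ (y * x) := by
    intro x y
    have h := hright x⁻¹ (y * x)
    rw [mul_inv_cancel_right, wbx_wl_inv hSsym hSgen] at h
    linarith
  have hψ : ∀ (e : E) (m : ℤ), ⌊φ (e * ι m)⌋ = ⌊φ e⌋ + m := by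
    intro e m; rw [hequi e m, Int.floor_add_intCast]
  choose sec hsec using hsurj
  set s : Gq → E := fun g => sec g * ι (-(⌊φ (sec g)⌋)) with hsdef
  have hπι : ∀ n : ℤ, π (ι n) = 1 := fun n => (hexact _).mpr ⟨n, rfl⟩
  have hπs : ∀ g : Gq, π (s g) = g := by
    intro g
    simp [hsdef, map_mul, hπι, hsec]
  have hφs : ∀ g : Gq, 0 ≤ φ (s g) ∧ φ (s g) < 1 := by
    intro g
    have hval : φ (s g) = φ (sec g) - (⌊φ (sec g)⌋ : ℝ) := by
      simp only [hsdef]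
      rw [hequi (sec g) (-(⌊φ (sec g)⌋))]
      push_cast
      ring
    exact ⟨by rw [hval]; linarith [Int.floor_le (φ (sec g))],
      by rw [hval]; linarith [Int.lt_floor_add_one (φ (sec g))]⟩
  have hψs : ∀ g : Gq, ⌊φ (s g)⌋ = 0 := fun g =>
    Int.floor_eq_zero_iff.mpr ⟨(hφs g).1, (hφs g).2⟩
  have hz : ∀ g h : Gq, ∃ k : ℤ, ι k = s g * s h * (s (g * h))⁻¹ := by
    intro g h
    refine (hexact _).mp ?_
    rw [map_mul, map_mul, map_inv, hπs, hπs, hπs]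
    group
  choose ω hω using hz
  have hωval : ∀ g h : Gq, ω g h = ⌊φ (s g * s h)⌋ := by
    intro g h
    have h2 : s g * s h = s (g * h) * ι (ω g h) := by
      rw [← hcentral, hω g h]
      group
    rw [h2, hψ, hψs, zero_add]
  refine ⟨s, hπs, ω, hω, ω, fun _ => 0, by intro g₁ g₂; ring, ?_⟩
  intro g
  set C : ℝ := 2 * lam * (wordLenOn S (s g) : ℝ) with hC
  have hC0 : (0 : ℝ) ≤ C := by
    have h1 : (0 : ℝ) ≤ (wordLenOn S (s g) : ℝ) := Nat.cast_nonneg _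
    nlinarith
  have hceil := Int.le_ceil (2 + C)
  refine ⟨⌈2 + C⌉, ?_, ?_⟩
  · intro h
    have h1 := hleft (s g) (s h)
    have h2 := hleft' (s g) (s h)
    have h3 := hφs h
    have h4 : ((|ω g h| : ℤ) : ℝ) ≤ ((⌈2 + C⌉ : ℤ) : ℝ) := by
      rw [hωval g h, Int.cast_abs]
      have hf1 := Int.floor_le (φ (s g * s h))
      have hf2 := Int.lt_floor_add_one (φ (s g * s h))
      rw [abs_le]
      constructor <;> linarith [h3.1, h3.2]
    exact_mod_cast h4
  · intro h
    have h1 := hright (s g) (s h)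
    have h2 := hright' (s g) (s h)
    have h3 := hφs h
    have h4 : ((|ω h g| : ℤ) : ℝ) ≤ ((⌈2 + C⌉ : ℤ) : ℝ) := by
      rw [hωval h g, Int.cast_abs]
      have hf1 := Int.floor_le (φ (s h * s g))
      have hf2 := Int.lt_floor_add_one (φ (s h * s g))
      rw [abs_le]
      constructor <;> linarith [h3.1, h3.2]
    exact_mod_cast h4
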